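/- Let (Y, ν) be a probability space and let F_k : Y → ℝ (k ∈ ℕ) be a sequence of square integrable functions. Suppose there exist constants C, σ > 0 such that for all nonnegative integers m < n one has ∫_Y (Σ_{m < k ≤ n} F_k(y))² dν(y) ≤ C(n^σ − m^σ). Then for every ε > 0, for ν-almost every y ∈ Y, lim_{N→∞} (Σ_{1 ≤ k ≤ N} F_k(y)) / (N^{σ/2} (log N)^{3/2+ε}) = 0. -/

import Mathlib

open Finset

/-- Dyadic square function at offset `m`, scale `2^J`. -/
def dyT (f : ℕ → ℝ) (m J : ℕ) : ℝ :=
  ∑ j ∈ Finset.range (J+1), ∑ i ∈ Finset.range (2^(J-j)),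
    (∑ k ∈ Finset.Ioc (m + i*2^j) (m + (i+1)*2^j), f k)^2

lemma dyT_nonneg (f : ℕ → ℝ) (m J : ℕ) : 0 ≤ dyT f m J := by
  apply Finset.sum_nonneg; intro j _; apply Finset.sum_nonneg; intro i _; positivity

lemma dyT_mono (f : ℕ → ℝ) (m J : ℕ) : dyT f m J ≤ dyT f m (J+1) := by
  unfold dyT
  rw [Finset.sum_range_succ (n := J+1)]
  have h1 : ∀ j ∈ Finset.range (J+1),
      (∑ i ∈ Finset.range (2^(J-j)), (∑ k ∈ Finset.Ioc (m + i*2^j) (m + (i+1)*2^j), f k)^2)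
      ≤ ∑ i ∈ Finset.range (2^(J+1-j)), (∑ k ∈ Finset.Ioc (m + i*2^j) (m + (i+1)*2^j), f k)^2 := by
    intro j hj
    apply Finset.sum_le_sum_of_subset_of_nonneg
    · exact Finset.range_subset_range.2 (Nat.pow_le_pow_right (by norm_num) (by omega))
    · intro i _ _; positivity
  have hmain := Finset.sum_le_sum h1
  refine hmain.trans ?_
  have hnn : (0:ℝ) ≤ ∑ i ∈ Finset.range (2^(J+1-(J+1))),
      (∑ k ∈ Finset.Ioc (m + i*2^(J+1)) (m + (i+1)*2^(J+1)), f k)^2 := by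
    apply Finset.sum_nonneg; intro i _; positivity
  linarith

lemma dyT_split (f : ℕ → ℝ) (m J : ℕ) :
    (∑ k ∈ Finset.Ioc m (m + 2^J), f k)^2 + dyT f (m + 2^J) J ≤ dyT f m (J+1) := by
  unfold dyT
  rw [Finset.sum_range_succ (n := J+1)]
  have key : ∀ j ∈ Finset.range (J+1),
      (∑ i ∈ Finset.range (2^(J+1-j)), (∑ k ∈ Finset.Ioc (m + i*2^j) (m + (i+1)*2^j), f k)^2)
      = (∑ i ∈ Finset.range (2^(J-j)), (∑ k ∈ Finset.Ioc (m + i*2^j) (m + (i+1)*2^j), f k)^2)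
      + (∑ i ∈ Finset.range (2^(J-j)), (∑ k ∈ Finset.Ioc (m + 2^J + i*2^j) (m + 2^J + (i+1)*2^j), f k)^2) := by
    intro j hj
    have hjJ : j ≤ J := by simp at hj; omega
    have hpow : 2^(J+1-j) = 2^(J-j) + 2^(J-j) := by
      have h' : J+1-j = (J-j)+1 := by omega
      rw [h', pow_succ]; ring
    rw [hpow, Finset.sum_range_add]
    congr 1
    apply Finset.sum_congr rfl
    intro i _
    have h2 : 2^(J-j) * 2^j = 2^J := by
      rw [← pow_add]; congr 1; omega
    have e1 : m + (2^(J-j)+i)*2^j = m + 2^J + i*2^j := by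
      rw [Nat.add_mul, h2]; ring
    have e2 : m + (2^(J-j)+i+1)*2^j = m + 2^J + (i+1)*2^j := by
      rw [Nat.add_mul, Nat.add_mul, h2]; ring
    rw [e1, e2]
  rw [Finset.sum_congr rfl key, Finset.sum_add_distrib]
  have hA : (∑ k ∈ Finset.Ioc m (m + 2^J), f k)^2 ≤
      ∑ j ∈ Finset.range (J+1), ∑ i ∈ Finset.range (2^(J-j)),
        (∑ k ∈ Finset.Ioc (m + i*2^j) (m + (i+1)*2^j), f k)^2 := by
    have hJmem : J ∈ Finset.range (J+1) := by simp
    have hs := Finset.single_le_sum (f := fun j => ∑ i ∈ Finset.range (2^(J-j)),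
        (∑ k ∈ Finset.Ioc (m + i*2^j) (m + (i+1)*2^j), f k)^2)
        (fun j _ => by apply Finset.sum_nonneg; intro i _; positivity) hJmem
    refine le_trans ?_ hs
    simp
  have hlast : (0:ℝ) ≤ ∑ i ∈ Finset.range (2^(J+1-(J+1))),
      (∑ k ∈ Finset.Ioc (m + i*2^(J+1)) (m + (i+1)*2^(J+1)), f k)^2 := by
    apply Finset.sum_nonneg; intro i _; positivity
  linarith

/-- The pointwise Rademacher–Menshov chaining bound. -/
lemma dyadic_sq_bound (f : ℕ → ℝ) :
    ∀ (J m n : ℕ), m < n → n ≤ m + 2^J →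
    (∑ k ∈ Finset.Ioc m n, f k)^2 ≤ ((J:ℝ)+1) * dyT f m J := by
  intro J
  induction J with
  | zero =>
    intro m n h1 h2
    have hn : n = m + 1 := by omega
    subst hn
    simp [dyT]
  | succ J ih =>
    intro m n h1 h2
    have hc1 : (0:ℝ) < (J:ℝ)+1 := by positivity
    by_cases hc : n ≤ m + 2^J
    · have step1 := ih m n h1 hc
      have step2 := dyT_mono f m J
      have := dyT_nonneg f m (J+1)
      push_cast
      nlinarith
    · push_neg at hc
      set a := ∑ k ∈ Finset.Ioc m (m + 2^J), f k with ha
      set b := ∑ k ∈ Finset.Ioc (m + 2^J) n, f k with hb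
      have hsum : a + b = ∑ k ∈ Finset.Ioc m n, f k :=
        Finset.sum_Ioc_consecutive f (by omega) (le_of_lt hc)
      have hbb : b^2 ≤ ((J:ℝ)+1) * dyT f (m + 2^J) J := by
        apply ih _ _ hc
        have hp : 2^(J+1) = 2^J + 2^J := by rw [pow_succ]; ring
        omega
      have hsplit := dyT_split f m J
      have h2' : ((J:ℝ)+1)*(a+b)^2 ≤ ((J:ℝ)+1)*(((J:ℝ)+2)*(a^2 + dyT f (m+2^J) J)) := by
        nlinarith [sq_nonneg (((J:ℝ)+1)*a - b),
          mul_le_mul_of_nonneg_left hbb (by positivity : (0:ℝ) ≤ (J:ℝ)+2)]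
      have h3 : (a+b)^2 ≤ ((J:ℝ)+2)*(a^2 + dyT f (m+2^J) J) :=
        le_of_mul_le_mul_left h2' hc1
      have h4 : ((J:ℝ)+2)*(a^2 + dyT f (m+2^J) J) ≤ ((J:ℝ)+2)*dyT f m (J+1) :=
        mul_le_mul_of_nonneg_left hsplit (by positivity)
      push_cast
      calc (∑ k ∈ Finset.Ioc m n, f k)^2 = (a+b)^2 := by rw [hsum]
        _ ≤ ((J:ℝ)+2)*(a^2 + dyT f (m+2^J) J) := h3
        _ ≤ ((J:ℝ)+2)*dyT f m (J+1) := h4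
        _ = ((J:ℝ)+1+1) * dyT f m (J+1) := by ring

open MeasureTheory Filter

/-- The weight sequence. -/
noncomputable def wgt (σ ε : ℝ) (J : ℕ) : ℝ :=
  ((2:ℝ)^(J-1))^(σ/2) * (((J:ℝ)-1)*Real.log 2)^((3:ℝ)/2+ε)

lemma rpow_sq' (x p : ℝ) (hx : 0 ≤ x) : (x ^ p)^2 = x^(p*2) := by
  rw [← Real.rpow_natCast (x^p) 2, ← Real.rpow_mul hx]
  norm_num

lemma wgt_sq (σ ε : ℝ) (K : ℕ) :
    (wgt σ ε (K+2))^2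
      = ((2:ℝ)^(K+1))^σ * (((K:ℝ)+1)^((3:ℝ)+2*ε) * (Real.log 2)^((3:ℝ)+2*ε)) := by
  have hL2 : (0:ℝ) < Real.log 2 := Real.log_pos one_lt_two
  have hK1 : (0:ℝ) ≤ (K:ℝ)+1 := by positivity
  unfold wgt
  have e : K + 2 - 1 = K + 1 := rfl
  have ec : ((K+2:ℕ):ℝ) - 1 = (K:ℝ)+1 := by push_cast; ring
  rw [e, ec, mul_pow, rpow_sq' _ _ (by positivity), rpow_sq' _ _ (by positivity)]
  rw [show σ/2*2 = σ by ring, show ((3:ℝ)/2+ε)*2 = (3:ℝ)+2*ε by ring]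
  rw [Real.mul_rpow hK1 hL2.le]

/-- normalized square function -/
noncomputable def auxH {Y : Type*} (F : ℕ → Y → ℝ) (σ ε : ℝ) (J : ℕ) (y : Y) : ℝ :=
  (((J:ℝ)+1) * dyT (fun k => F k y) 0 J) * ((wgt σ ε J)^2)⁻¹

noncomputable def auxB (C σ ε : ℝ) (J : ℕ) : ℝ :=
  (((J:ℝ)+1)^2 * (C * ((2:ℝ)^J)^σ)) * ((wgt σ ε J)^2)⁻¹

lemma auxB_bound (C σ ε : ℝ) (hC : 0 < C) (hε : 0 < ε) (K : ℕ) :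
    auxB C σ ε (K+2)
      ≤ (9 * C * (2:ℝ)^σ / (Real.log 2)^((3:ℝ)+2*ε)) / ((K:ℝ)+1)^((1:ℝ)+2*ε) := by
  have hL2 : (0:ℝ) < Real.log 2 := Real.log_pos one_lt_two
  have hK1 : (0:ℝ) < (K:ℝ)+1 := by positivity
  have ht : (0:ℝ) < ((2:ℝ)^(K+1))^σ := Real.rpow_pos_of_pos (by positivity) σ
  have hv : (0:ℝ) < (Real.log 2)^((3:ℝ)+2*ε) := Real.rpow_pos_of_pos hL2 _
  have hp : (0:ℝ) < ((K:ℝ)+1)^((1:ℝ)+2*ε) := Real.rpow_pos_of_pos hK1 _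
  have hs : (0:ℝ) < (2:ℝ)^σ := Real.rpow_pos_of_pos (by norm_num) σ
  unfold auxB
  rw [wgt_sq σ ε K]
  have htop : ((2:ℝ)^(K+2))^σ = ((2:ℝ)^(K+1))^σ * (2:ℝ)^σ := by
    rw [show ((2:ℝ)^(K+2)) = (2:ℝ)^(K+1) * 2 from by ring,
      Real.mul_rpow (by positivity) (by norm_num)]
  have hu : ((K:ℝ)+1)^((3:ℝ)+2*ε) = ((K:ℝ)+1)^2 * ((K:ℝ)+1)^((1:ℝ)+2*ε) := by
    rw [← Real.rpow_natCast ((K:ℝ)+1) 2, ← Real.rpow_add hK1]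
    norm_num
    congr 1
    ring
  rw [htop, hu, ← div_eq_mul_inv, div_div]
  rw [div_le_div_iff₀ (by positivity) (by positivity)]
  have h9 : (((K+2:ℕ):ℝ)+1)^2 ≤ 9 * ((K:ℝ)+1)^2 := by
    push_cast
    nlinarith [hK1.le, sq_nonneg (K:ℝ)]
  have hfin := mul_le_mul_of_nonneg_right h9
    (by positivity : (0:ℝ) ≤ C * (((2:ℝ)^(K+1))^σ * (2:ℝ)^σ)
      * ((Real.log 2)^((3:ℝ)+2*ε) * ((K:ℝ)+1)^((1:ℝ)+2*ε)))
  nlinarith [hfin]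

theorem quantitative_pointwise_tool
    {Y : Type*} [MeasurableSpace Y] (ν : Measure Y) [IsProbabilityMeasure ν]
    (F : ℕ → Y → ℝ)
    (hFmeas : ∀ k : ℕ, 1 ≤ k → Measurable (F k))
    (hFL2 : ∀ k : ℕ, 1 ≤ k → MemLp (F k) 2 ν)
    (C σ : ℝ) (hC : 0 < C) (hσ : 0 < σ)
    (hbound : ∀ m n : ℕ, m < n →
      ∫ y, (∑ k ∈ Finset.Ioc m n, F k y) ^ 2 ∂ν ≤ C * ((n : ℝ) ^ σ - (m : ℝ) ^ σ)) :
    ∀ ε : ℝ, 0 < ε →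
      ∀ᵐ y ∂ν, Tendsto
        (fun N : ℕ => (∑ k ∈ Finset.Icc 1 N, F k y) /
          ((N : ℝ) ^ (σ / 2) * Real.log N ^ ((3 : ℝ) / 2 + ε)))
        atTop (nhds 0) := by
  intro ε hε
  have hL2 : (0:ℝ) < Real.log 2 := Real.log_pos one_lt_two
  -- block sums are in L²
  have hincL2 : ∀ m n : ℕ, MemLp (fun y => ∑ k ∈ Finset.Ioc m n, F k y) 2 ν := by
    intro m n
    have h := memLp_finset_sum' (Finset.Ioc m n) (f := F)
      (fun k hk => hFL2 k (by have := (Finset.mem_Ioc.1 hk).1; omega))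
    have heq : (∑ i ∈ Finset.Ioc m n, F i) = fun y => ∑ k ∈ Finset.Ioc m n, F k y := by
      funext y; simp
    rwa [heq] at h
  have hsqInt : ∀ m n : ℕ, Integrable (fun y => (∑ k ∈ Finset.Ioc m n, F k y) ^ 2) ν :=
    fun m n => (hincL2 m n).integrable_sq
  have hincMeas : ∀ m n : ℕ, Measurable (fun y => ∑ k ∈ Finset.Ioc m n, F k y) := by
    intro m n
    exact Finset.measurable_sum _
      (fun k hk => hFmeas k (by have := (Finset.mem_Ioc.1 hk).1; omega))
  have hTmeas : ∀ J, Measurable (fun y => dyT (fun k => F k y) 0 J) := by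
    intro J
    simp only [dyT]
    apply Finset.measurable_sum
    intro j _
    apply Finset.measurable_sum
    intro i _
    exact (hincMeas _ _).pow_const 2
  have hTint : ∀ J, Integrable (fun y => dyT (fun k => F k y) 0 J) ν := by
    intro J
    simp only [dyT]
    apply integrable_finset_sum
    intro j _
    apply integrable_finset_sum
    intro i _
    exact hsqInt _ _
  -- integral bound for the dyadic square function
  have hTbound : ∀ J, ∫ y, dyT (fun k => F k y) 0 J ∂ν ≤ ((J:ℝ)+1) * (C * ((2:ℝ)^J)^σ) := by
    intro J
    have hrw : ∫ y, dyT (fun k => F k y) 0 J ∂ν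
        = ∑ j ∈ Finset.range (J+1), ∑ i ∈ Finset.range (2^(J-j)),
            ∫ y, (∑ k ∈ Finset.Ioc (0 + i*2^j) (0 + (i+1)*2^j), F k y)^2 ∂ν := by
      simp only [dyT]
      rw [integral_finset_sum _ (fun j _ => integrable_finset_sum _ (fun i _ => hsqInt _ _))]
      exact Finset.sum_congr rfl (fun j _ => integral_finset_sum _ (fun i _ => hsqInt _ _))
    rw [hrw]
    have hinner : ∀ j ∈ Finset.range (J+1),
        ∑ i ∈ Finset.range (2^(J-j)),
          ∫ y, (∑ k ∈ Finset.Ioc (0 + i*2^j) (0 + (i+1)*2^j), F k y)^2 ∂ν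
        ≤ C * ((2:ℝ)^J)^σ := by
      intro j hj
      have hjJ : j ≤ J := by simp at hj; omega
      have hstep : ∀ i ∈ Finset.range (2^(J-j)),
          ∫ y, (∑ k ∈ Finset.Ioc (0 + i*2^j) (0 + (i+1)*2^j), F k y)^2 ∂ν
          ≤ C * ((fun i => (((i*2^j : ℕ)):ℝ)^σ) (i+1) - (fun i => (((i*2^j : ℕ)):ℝ)^σ) i) := by
        intro i _
        have hlt : i*2^j < (i+1)*2^j :=
          (Nat.mul_lt_mul_right (Nat.two_pow_pos j)).2 (Nat.lt_succ_self i)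
        have hb := hbound (i*2^j) ((i+1)*2^j) hlt
        simpa using hb
      calc ∑ i ∈ Finset.range (2^(J-j)),
            ∫ y, (∑ k ∈ Finset.Ioc (0 + i*2^j) (0 + (i+1)*2^j), F k y)^2 ∂ν
          ≤ ∑ i ∈ Finset.range (2^(J-j)),
              C * ((fun i => (((i*2^j : ℕ)):ℝ)^σ) (i+1) - (fun i => (((i*2^j : ℕ)):ℝ)^σ) i) :=
            Finset.sum_le_sum hstep
        _ = C * ∑ i ∈ Finset.range (2^(J-j)),
              ((fun i => (((i*2^j : ℕ)):ℝ)^σ) (i+1) - (fun i => (((i*2^j : ℕ)):ℝ)^σ) i) := by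
            rw [Finset.mul_sum]
        _ = C * ((fun i => (((i*2^j : ℕ)):ℝ)^σ) (2^(J-j)) - (fun i => (((i*2^j : ℕ)):ℝ)^σ) 0) := by
            rw [Finset.sum_range_sub (fun i => (((i*2^j : ℕ)):ℝ)^σ)]
        _ = C * ((2:ℝ)^J)^σ := by
            have h2 : 2^(J-j) * 2^j = 2^J := by rw [← pow_add]; congr 1; omega
            have h3 : (((2^(J-j) * 2^j : ℕ)):ℝ)^σ = ((2:ℝ)^J)^σ := by
              rw [h2]; congr 1; push_cast; ring
            simp only [h3, Nat.zero_mul, Nat.cast_zero, Real.zero_rpow hσ.ne', sub_zero]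
    calc ∑ j ∈ Finset.range (J+1), ∑ i ∈ Finset.range (2^(J-j)),
          ∫ y, (∑ k ∈ Finset.Ioc (0 + i*2^j) (0 + (i+1)*2^j), F k y)^2 ∂ν
        ≤ ∑ _j ∈ Finset.range (J+1), C * ((2:ℝ)^J)^σ := Finset.sum_le_sum hinner
      _ = ((J:ℝ)+1) * (C * ((2:ℝ)^J)^σ) := by
          rw [Finset.sum_const, Finset.card_range, nsmul_eq_mul]
          push_cast; ring
  -- properties of auxH
  have hhnonneg : ∀ J y, 0 ≤ auxH F σ ε J y := by
    intro J y
    apply mul_nonneg (mul_nonneg (by positivity) (dyT_nonneg _ 0 J))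
    positivity
  have hhmeas : ∀ J, Measurable (auxH F σ ε J) := by
    intro J
    unfold auxH
    exact (((hTmeas J).const_mul _).mul_const _)
  have hhInt : ∀ J, Integrable (auxH F σ ε J) ν := by
    intro J
    unfold auxH
    exact (((hTint J).const_mul _).mul_const _)
  have hhintbound : ∀ J, ∫ y, auxH F σ ε J y ∂ν ≤ auxB C σ ε J := by
    intro J
    unfold auxH
    rw [integral_mul_const, integral_const_mul]
    calc (((J:ℝ)+1) * ∫ y, dyT (fun k => F k y) 0 J ∂ν) * ((wgt σ ε J)^2)⁻¹
        ≤ (((J:ℝ)+1) * (((J:ℝ)+1) * (C * ((2:ℝ)^J)^σ))) * ((wgt σ ε J)^2)⁻¹ := by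
          apply mul_le_mul_of_nonneg_right _ (by positivity)
          exact mul_le_mul_of_nonneg_left (hTbound J) (by positivity)
      _ = auxB C σ ε J := by unfold auxB; ring
  -- summability of the bounds
  have hBnonneg : ∀ J, 0 ≤ auxB C σ ε J := by
    intro J
    unfold auxB
    have : (0:ℝ) ≤ ((2:ℝ)^J)^σ := Real.rpow_nonneg (by positivity) σ
    positivity
  have hBsum : Summable (auxB C σ ε) := by
    apply (summable_nat_add_iff 2).1
    have hD : Summable (fun K : ℕ =>
        (9 * C * (2:ℝ)^σ / (Real.log 2)^((3:ℝ)+2*ε)) / ((K:ℝ)+1)^((1:ℝ)+2*ε)) := by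
      have h1 : Summable (fun n : ℕ => 1 / (n:ℝ)^((1:ℝ)+2*ε)) :=
        Real.summable_one_div_nat_rpow.2 (by linarith)
      have h2 : Summable (fun K : ℕ => 1 / ((K:ℝ)+1)^((1:ℝ)+2*ε)) := by
        have h3 := (summable_nat_add_iff 1).2 h1
        simpa using h3
      simpa [div_eq_mul_inv, one_div] using
        h2.mul_left (9 * C * (2:ℝ)^σ / (Real.log 2)^((3:ℝ)+2*ε))
    exact Summable.of_nonneg_of_le (fun K => hBnonneg (K+2))
      (fun K => auxB_bound C σ ε hC hε K) hD
  -- the Borel–Cantelli style argument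
  have hφmeas : ∀ J, Measurable (fun y => ENNReal.ofReal (auxH F σ ε J y)) :=
    fun J => (hhmeas J).ennreal_ofReal
  have htsum_ne : ∑' J, ∫⁻ y, ENNReal.ofReal (auxH F σ ε J y) ∂ν ≠ ⊤ := by
    have hle : ∑' J, ∫⁻ y, ENNReal.ofReal (auxH F σ ε J y) ∂ν
        ≤ ∑' J, ENNReal.ofReal (auxB C σ ε J) := by
      apply ENNReal.tsum_le_tsum
      intro J
      rw [← ofReal_integral_eq_lintegral_ofReal (hhInt J)
        (Filter.Eventually.of_forall (fun y => hhnonneg J y))]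
      exact ENNReal.ofReal_le_ofReal (hhintbound J)
    have hne : ∑' J, ENNReal.ofReal (auxB C σ ε J) ≠ ⊤ := by
      rw [← ENNReal.ofReal_tsum_of_nonneg hBnonneg hBsum]
      exact ENNReal.ofReal_ne_top
    exact fun htop => hne (top_le_iff.1 (htop ▸ hle))
  have hae : ∀ᵐ y ∂ν, ∑' J, ENNReal.ofReal (auxH F σ ε J y) < ⊤ := by
    apply ae_lt_top' (Measurable.ennreal_tsum hφmeas).aemeasurable
    rw [lintegral_tsum (fun J => (hφmeas J).aemeasurable)]
    exact htsum_ne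
  filter_upwards [hae] with y hy
  -- pointwise: the normalized square functions tend to 0
  have hsum' : Summable (fun J => auxH F σ ε J y) := by
    have h1 := ENNReal.summable_toReal hy.ne
    exact h1.congr (fun J => ENNReal.toReal_ofReal (hhnonneg J y))
  have hh0 : Tendsto (fun J => auxH F σ ε J y) atTop (nhds 0) := hsum'.tendsto_atTop_zero
  have hJtend : Tendsto (fun n : ℕ => Nat.log 2 n + 1) atTop atTop := by
    apply tendsto_atTop_atTop.2
    intro b
    refine ⟨2^b, fun n hn => ?_⟩
    have hb : b ≤ Nat.log 2 n := by
      have h := Nat.log_mono_right (b := 2) hn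
      rwa [Nat.log_pow (by norm_num : 1 < 2)] at h
    omega
  have hsqrt0 : Tendsto (fun n : ℕ => Real.sqrt (auxH F σ ε (Nat.log 2 n + 1) y))
      atTop (nhds 0) :=
    (Real.continuous_sqrt.tendsto' 0 0 Real.sqrt_zero).comp (hh0.comp hJtend)
  -- pointwise domination for n ≥ 2
  have hdom : ∀ n : ℕ, 2 ≤ n →
      |(∑ k ∈ Finset.Icc 1 n, F k y) / ((n:ℝ)^(σ/2) * Real.log n ^ ((3:ℝ)/2+ε))|
        ≤ Real.sqrt (auxH F σ ε (Nat.log 2 n + 1) y) := by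
    intro n hn2
    set J := Nat.log 2 n + 1 with hJdef
    have hlog1 : 1 ≤ Nat.log 2 n := Nat.log_pos (by norm_num) (by omega)
    have hnle : n ≤ 2^J := le_of_lt (Nat.lt_pow_succ_log_self (by norm_num) n)
    have hge : 2^(J-1) ≤ n := by
      have hJ1 : J - 1 = Nat.log 2 n := by omega
      rw [hJ1]
      exact Nat.pow_log_le_self 2 (by omega)
    have hicc : Finset.Icc 1 n = Finset.Ioc 0 n := by
      ext x; simp only [Finset.mem_Icc, Finset.mem_Ioc]; omega
    have hkey : (∑ k ∈ Finset.Icc 1 n, F k y)^2 ≤ ((J:ℝ)+1) * dyT (fun k => F k y) 0 J := by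
      rw [hicc]
      exact dyadic_sq_bound (fun k => F k y) J 0 n (by omega) (by simpa using hnle)
    have habs : |∑ k ∈ Finset.Icc 1 n, F k y|
        ≤ Real.sqrt (((J:ℝ)+1) * dyT (fun k => F k y) 0 J) := Real.abs_le_sqrt hkey
    have hb2 : ((2:ℝ)^(J-1)) ≤ (n:ℝ) := by exact_mod_cast hge
    have hf1 : ((2:ℝ)^(J-1))^(σ/2) ≤ (n:ℝ)^(σ/2) :=
      Real.rpow_le_rpow (by positivity) hb2 (by positivity)
    have hJR : (1:ℝ) ≤ (J:ℝ) := by exact_mod_cast (by omega : 1 ≤ J)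
    have hlogeq : ((J:ℝ)-1) * Real.log 2 = Real.log ((2:ℝ)^(J-1)) := by
      rw [Real.log_pow]
      have hc : ((J-1:ℕ):ℝ) = (J:ℝ)-1 := by
        rw [Nat.cast_sub (by omega : 1 ≤ J)]; simp
      rw [hc]
    have hbase_nonneg : (0:ℝ) ≤ ((J:ℝ)-1) * Real.log 2 :=
      mul_nonneg (by linarith) hL2.le
    have hf2 : (((J:ℝ)-1) * Real.log 2)^((3:ℝ)/2+ε) ≤ (Real.log n)^((3:ℝ)/2+ε) := by
      apply Real.rpow_le_rpow hbase_nonneg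
      · rw [hlogeq]
        exact Real.log_le_log (by positivity) hb2
      · positivity
    have hJR2 : (2:ℝ) ≤ (J:ℝ) := by exact_mod_cast (by omega : 2 ≤ J)
    have hwpos : 0 < wgt σ ε J := by
      unfold wgt
      apply mul_pos (Real.rpow_pos_of_pos (by positivity) _)
      apply Real.rpow_pos_of_pos
      nlinarith
    have hwden : wgt σ ε J ≤ (n:ℝ)^(σ/2) * Real.log n ^ ((3:ℝ)/2+ε) := by
      unfold wgt
      apply mul_le_mul hf1 hf2 (Real.rpow_nonneg hbase_nonneg _) (Real.rpow_nonneg (by positivity) _)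
    rw [abs_div, abs_of_pos (lt_of_lt_of_le hwpos hwden)]
    have hdd : |∑ k ∈ Finset.Icc 1 n, F k y| / ((n:ℝ)^(σ/2) * Real.log n ^ ((3:ℝ)/2+ε))
        ≤ Real.sqrt (((J:ℝ)+1) * dyT (fun k => F k y) 0 J) / wgt σ ε J :=
      div_le_div₀ (Real.sqrt_nonneg _) habs hwpos hwden
    refine hdd.trans (le_of_eq ?_)
    have hnum : (0:ℝ) ≤ ((J:ℝ)+1) * dyT (fun k => F k y) 0 J :=
      mul_nonneg (by positivity) (dyT_nonneg _ 0 J)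
    have hHrw : auxH F σ ε J y
        = (((J:ℝ)+1) * dyT (fun k => F k y) 0 J) / (wgt σ ε J)^2 := by
      unfold auxH; rw [div_eq_mul_inv]
    rw [hHrw, Real.sqrt_div hnum, Real.sqrt_sq hwpos.le]
  -- squeeze
  have hneg : Tendsto (fun n : ℕ => -Real.sqrt (auxH F σ ε (Nat.log 2 n + 1) y))
      atTop (nhds 0) := by simpa using hsqrt0.neg
  refine tendsto_of_tendsto_of_tendsto_of_le_of_le' hneg hsqrt0 ?_ ?_
  · filter_upwards [eventually_ge_atTop 2] with n hn
    linarith [(abs_le.1 (hdom n hn)).1]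
  · filter_upwards [eventually_ge_atTop 2] with n hn
    exact (abs_le.1 (hdom n hn)).2
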